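/- For every n ≥ 0, the following identity holds in the polynomial ring ℤ[x,y,s]: A_{n+1}(x,y,s) = Σ_{i=0}^{n} C(n,i) · Ā_i(x,y) · C_{n−i}(x,y,s), where C(n,i) is the binomial coefficient. -/

import Mathlib

open Finset MvPolynomial

/-- The word `π(1)π(2)⋯π(n)` of a permutation, as a function on 0-based positions. -/
def permWord {n : ℕ} (π : Equiv.Perm (Fin n)) (i : ℕ) : ℕ :=
  if h : i < n then ((π ⟨i, h⟩ : Fin n) : ℕ) + 1 else 0

/-- Number of descents. -/
def desNum {n : ℕ} (π : Equiv.Perm (Fin n)) : ℕ :=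
  ((range (n - 1)).filter fun i => permWord π (i + 1) < permWord π i).card

/-- Number of ascents. -/
def ascNum {n : ℕ} (π : Equiv.Perm (Fin n)) : ℕ :=
  ((range (n - 1)).filter fun i => permWord π i < permWord π (i + 1)).card

/-- Number of big ascents. -/
def bascNum {n : ℕ} (π : Equiv.Perm (Fin n)) : ℕ :=
  ((range (n - 1)).filter fun i => permWord π i + 2 ≤ permWord π (i + 1)).card

/-- Number of successions. -/
def sucNum {n : ℕ} (π : Equiv.Perm (Fin n)) : ℕ :=
  ((range (n - 1)).filter fun i => permWord π (i + 1) = permWord π i + 1).card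

/-- Number of excedances: indices `i` with `π(i) > i`. -/
def excNum {n : ℕ} (π : Equiv.Perm (Fin n)) : ℕ :=
  (Finset.univ.filter fun i : Fin n => (i : ℕ) < (π i : ℕ)).card

/-- Number of anti-excedances: indices `i` with `π(i) < i`. -/
def aexcNum {n : ℕ} (π : Equiv.Perm (Fin n)) : ℕ :=
  (Finset.univ.filter fun i : Fin n => (π i : ℕ) < (i : ℕ)).card

/-- Number of fixed points: indices `i` with `π(i) = i`. -/
def fixNum {n : ℕ} (π : Equiv.Perm (Fin n)) : ℕ :=
  (Finset.univ.filter fun i : Fin n => π i = i).card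

/-- The trivariate Eulerian polynomial `A_n(x,y,s) ∈ ℤ[x,y,s]`, with
`x = X 0`, `y = X 1`, `s = X 2`. -/
noncomputable def trivEuler (n : ℕ) : MvPolynomial (Fin 3) ℤ :=
  ∑ π : Equiv.Perm (Fin n), X 0 ^ bascNum π * X 1 ^ desNum π * X 2 ^ sucNum π

/-- The bivariate Eulerian polynomial `Ā_n(x,y) = Σ_π x^{asc(π)} y^{des(π)+1}` for `n ≥ 1`,
with `Ā_0 = 1`. -/
noncomputable def bivEuler : ℕ → MvPolynomial (Fin 3) ℤ
  | 0 => 1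
  | n + 1 => ∑ π : Equiv.Perm (Fin (n + 1)), X 0 ^ ascNum π * X 1 ^ (desNum π + 1)

/-- `C_n(x,y,s) = Σ_π x^{exc(π)} y^{aexc(π)} s^{fix(π)}`. -/
noncomputable def excFixPoly (n : ℕ) : MvPolynomial (Fin 3) ℤ :=
  ∑ π : Equiv.Perm (Fin n), X 0 ^ excNum π * X 1 ^ aexcNum π * X 2 ^ fixNum π


section Aux
/-- insertion of the letter `n+1` at position `k` -/
def insPerm {n : ℕ} (k : Fin (n+1)) (σ : Equiv.Perm (Fin n)) : Equiv.Perm (Fin (n+1)) :=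
  ((finSuccEquiv' k).trans (Equiv.optionCongr σ)).trans (finSuccEquiv' (Fin.last n)).symm

lemma insPerm_at {n : ℕ} (k : Fin (n+1)) (σ : Equiv.Perm (Fin n)) :
    insPerm k σ k = Fin.last n := by
  simp [insPerm, finSuccEquiv'_at]

lemma insPerm_succAbove {n : ℕ} (k : Fin (n+1)) (σ : Equiv.Perm (Fin n)) (i : Fin n) :
    insPerm k σ (k.succAbove i) = Fin.castSucc (σ i) := by
  simp [insPerm, finSuccEquiv'_succAbove, ← Fin.succAbove_last]

lemma insPerm_injective {n : ℕ} :
    Function.Injective (fun p : Fin (n+1) × Equiv.Perm (Fin n) => insPerm p.1 p.2) := by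
  rintro ⟨k, σ⟩ ⟨k', σ'⟩ h
  simp only at h
  have hk : k = k' := by
    by_contra hne
    obtain ⟨i, hi⟩ := Fin.exists_succAbove_eq hne
    have h1 : insPerm k σ k = Fin.last n := insPerm_at k σ
    have h2 : insPerm k' σ' k = Fin.castSucc (σ' i) := by rw [← hi]; exact insPerm_succAbove _ _ _
    rw [h, h2] at h1
    exact absurd h1 (Fin.castSucc_lt_last (σ' i)).ne
  subst hk
  have hσ : σ = σ' := by
    apply Equiv.ext; intro i
    have := congrArg (fun (e : Equiv.Perm (Fin (n+1))) => e (k.succAbove i)) h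
    simp only [insPerm_succAbove] at this
    exact Fin.castSucc_injective _ this
  rw [hσ]

lemma insPerm_bijective {n : ℕ} :
    Function.Bijective (fun p : Fin (n+1) × Equiv.Perm (Fin n) => insPerm p.1 p.2) := by
  rw [Fintype.bijective_iff_injective_and_card]
  refine ⟨insPerm_injective, ?_⟩
  simp [Fintype.card_perm, Nat.factorial_succ]

lemma sum_perm_succ {n : ℕ} {M : Type*} [AddCommMonoid M] (F : Equiv.Perm (Fin (n+1)) → M) :
    ∑ π : Equiv.Perm (Fin (n+1)), F π
      = ∑ σ : Equiv.Perm (Fin n), ∑ k : Fin (n+1), F (insPerm k σ) := by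
  rw [← Fintype.sum_bijective _ insPerm_bijective _ F (fun _ => rfl), Fintype.sum_prod_type,
    Finset.sum_comm]

/-! word values of an inserted permutation -/

lemma permWord_insPerm_eq {n : ℕ} (k : Fin (n+1)) (σ : Equiv.Perm (Fin n)) :
    permWord (insPerm k σ) (k : ℕ) = n + 1 := by
  have : (⟨(k : ℕ), k.isLt⟩ : Fin (n+1)) = k := rfl
  simp [permWord, k.isLt, this, insPerm_at]

lemma permWord_insPerm_lt {n : ℕ} (k : Fin (n+1)) (σ : Equiv.Perm (Fin n)) {j : ℕ}
    (hj : j < (k : ℕ)) : permWord (insPerm k σ) j = permWord σ j := by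
  have hjn : j < n := lt_of_lt_of_le hj (Nat.lt_succ_iff.mp k.isLt)
  have hjn1 : j < n + 1 := Nat.lt_succ_of_lt hjn
  have hsa : k.succAbove ⟨j, hjn⟩ = (⟨j, hjn1⟩ : Fin (n+1)) := by
    rw [Fin.succAbove_of_castSucc_lt]
    · rfl
    · exact hj
  have := insPerm_succAbove k σ ⟨j, hjn⟩
  rw [hsa] at this
  simp [permWord, hjn, hjn1, this]

lemma permWord_insPerm_gt {n : ℕ} (k : Fin (n+1)) (σ : Equiv.Perm (Fin n)) {j : ℕ}
    (hk : (k : ℕ) < j) (hj : j < n + 1) : permWord (insPerm k σ) j = permWord σ (j - 1) := by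
  have hj1 : j - 1 < n := by omega
  have hsa : k.succAbove ⟨j - 1, hj1⟩ = (⟨j, hj⟩ : Fin (n+1)) := by
    rw [Fin.succAbove_of_le_castSucc]
    · simp [Fin.succ]; omega
    · simp [Fin.le_def]; omega
  have := insPerm_succAbove k σ ⟨j - 1, hj1⟩
  rw [hsa] at this
  simp [permWord, hj, hj1, this]

lemma permWord_lt {n : ℕ} (σ : Equiv.Perm (Fin n)) {j : ℕ} (hj : j < n) :
    1 ≤ permWord σ j ∧ permWord σ j ≤ n := by
  simp only [permWord, dif_pos hj]
  exact ⟨Nat.le_add_left 1 _, Nat.succ_le_of_lt (σ ⟨j, hj⟩).isLt⟩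

lemma permWord_zero_of_ge {n : ℕ} (σ : Equiv.Perm (Fin n)) {j : ℕ} (hj : n ≤ j) :
    permWord σ j = 0 := by simp [permWord, Nat.not_lt.mpr hj]

lemma permWord_inj {n : ℕ} (σ : Equiv.Perm (Fin n)) {i j : ℕ} (hi : i < n) (hj : j < n)
    (h : permWord σ i = permWord σ j) : i = j := by
  simp only [permWord, dif_pos hi, dif_pos hj, Nat.add_right_cancel_iff] at h
  have h2 : σ ⟨i, hi⟩ = σ ⟨j, hj⟩ := Fin.val_injective (by exact_mod_cast h)
  simpa using σ.injective h2

noncomputable def W3 (e a f : ℕ) : MvPolynomial (Fin 3) ℤ := X 0 ^ e * X 1 ^ a * X 2 ^ f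

lemma pderiv_pow_self (i : Fin 3) (e : ℕ) :
    pderiv i (X i ^ e : MvPolynomial (Fin 3) ℤ) = (e : MvPolynomial (Fin 3) ℤ) * X i ^ (e-1) := by
  rw [pderiv_pow, pderiv_X_self, mul_one]

lemma cast_mul_pow_pred (i : Fin 3) (e : ℕ) :
    (e : MvPolynomial (Fin 3) ℤ) * X i ^ (e-1) * X i = (e : MvPolynomial (Fin 3) ℤ) * X i ^ e := by
  cases e with
  | zero => simp
  | succ e' => rw [Nat.add_sub_cancel, mul_assoc, ← pow_succ]

lemma mono_deriv (e a f : ℕ) :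
    X 0 * X 1 * (pderiv 0 (W3 e a f) + pderiv 1 (W3 e a f) + pderiv 2 (W3 e a f))
      = (e : MvPolynomial (Fin 3) ℤ) * W3 e (a+1) f
        + (a : MvPolynomial (Fin 3) ℤ) * W3 (e+1) a f
        + (f : MvPolynomial (Fin 3) ℤ) * W3 (e+1) (a+1) (f-1) := by
  have h0 : pderiv 0 (W3 e a f) = ((e : MvPolynomial (Fin 3) ℤ) * X 0 ^ (e-1)) * X 1 ^ a * X 2 ^ f := by
    simp [W3, pderiv_mul, pderiv_pow_self, pderiv_pow, Fin.ne_of_val_ne]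
    ring
  have h1 : pderiv 1 (W3 e a f) = X 0 ^ e * ((a : MvPolynomial (Fin 3) ℤ) * X 1 ^ (a-1)) * X 2 ^ f := by
    simp [W3, pderiv_mul, pderiv_pow_self, pderiv_pow, Fin.ne_of_val_ne]
    ring
  have h2 : pderiv 2 (W3 e a f) = X 0 ^ e * X 1 ^ a * ((f : MvPolynomial (Fin 3) ℤ) * X 2 ^ (f-1)) := by
    simp [W3, pderiv_mul, pderiv_pow_self, pderiv_pow, Fin.ne_of_val_ne]
  rw [h0, h1, h2]
  have e0 := cast_mul_pow_pred 0 e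
  have e1 := cast_mul_pow_pred 1 a
  simp only [W3]
  linear_combination (X 1 ^ (a+1) * X 2 ^ f : MvPolynomial (Fin 3) ℤ) * e0 + (X 0 ^ (e+1) * X 2 ^ f : MvPolynomial (Fin 3) ℤ) * e1

section CycRec

variable {N : ℕ}

def extP (τ : Equiv.Perm (Fin N)) : Equiv.Perm (Fin (N+1)) := insPerm (Fin.last N) τ

lemma extP_castSucc (τ : Equiv.Perm (Fin N)) (i : Fin N) :
    extP τ i.castSucc = (τ i).castSucc := by
  have := insPerm_succAbove (Fin.last N) τ i
  rwa [Fin.succAbove_last] at this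

lemma extP_last (τ : Equiv.Perm (Fin N)) : extP τ (Fin.last N) = Fin.last N := insPerm_at _ _

def cyc (k : Fin (N+1)) (τ : Equiv.Perm (Fin N)) : Equiv.Perm (Fin (N+1)) :=
  (Equiv.swap k (Fin.last N)) * extP τ

lemma cyc_apply_last (k : Fin (N+1)) (τ : Equiv.Perm (Fin N)) : cyc k τ (Fin.last N) = k := by
  simp [cyc, Equiv.Perm.mul_apply, extP_last, Equiv.swap_apply_right]

lemma cyc_last_eq (τ : Equiv.Perm (Fin N)) : cyc (Fin.last N) τ = extP τ := by
  simp [cyc, Equiv.swap_self]; rfl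

lemma cyc_apply_castSucc (k₀ : Fin N) (τ : Equiv.Perm (Fin N)) (i : Fin N) :
    cyc k₀.castSucc τ i.castSucc
      = if τ i = k₀ then Fin.last N else (τ i).castSucc := by
  simp only [cyc, Equiv.Perm.mul_apply, extP_castSucc]
  rcases eq_or_ne (τ i) k₀ with h | h
  · simp [h, Equiv.swap_apply_left]
  · rw [Equiv.swap_apply_of_ne_of_ne (by simpa [Fin.castSucc_inj] using h)
      (Fin.castSucc_lt_last _).ne, if_neg h]

lemma cyc_bijective :
    Function.Bijective (fun p : Fin (N+1) × Equiv.Perm (Fin N) => cyc p.1 p.2) := by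
  rw [Fintype.bijective_iff_injective_and_card]
  constructor
  · rintro ⟨k, τ⟩ ⟨k', τ'⟩ h
    simp only at h
    have hk : k = k' := by
      rw [← cyc_apply_last k τ, h, cyc_apply_last]
    subst hk
    have hext : extP τ = extP τ' := mul_left_cancel (h : _ * _ = _ * _)
    have : τ = τ' := by
      apply Equiv.ext; intro i
      have := congrArg (fun (e : Equiv.Perm (Fin (N+1))) => e i.castSucc) hext
      simp only [extP_castSucc] at this
      exact Fin.castSucc_injective _ this
    rw [this]
  · simp [Fintype.card_perm, Nat.factorial_succ]

lemma sum_perm_cyc {M : Type*} [AddCommMonoid M] (F : Equiv.Perm (Fin (N+1)) → M) :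
    ∑ π : Equiv.Perm (Fin (N+1)), F π
      = ∑ τ : Equiv.Perm (Fin N), ∑ k : Fin (N+1), F (cyc k τ) := by
  rw [← Fintype.sum_bijective _ cyc_bijective _ F (fun _ => rfl), Fintype.sum_prod_type,
    Finset.sum_comm]

lemma extP_excNum (τ : Equiv.Perm (Fin N)) : excNum (extP τ) = excNum τ := by
  unfold excNum
  rw [Finset.card_filter, Finset.card_filter, Fin.sum_univ_castSucc]
  simp [extP_castSucc, extP_last]

lemma extP_aexcNum (τ : Equiv.Perm (Fin N)) : aexcNum (extP τ) = aexcNum τ := by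
  unfold aexcNum
  rw [Finset.card_filter, Finset.card_filter, Fin.sum_univ_castSucc]
  simp [extP_castSucc, extP_last]

lemma extP_fixNum (τ : Equiv.Perm (Fin N)) : fixNum (extP τ) = fixNum τ + 1 := by
  unfold fixNum
  rw [Finset.card_filter, Finset.card_filter, Fin.sum_univ_castSucc]
  simp [extP_castSucc, extP_last, Fin.castSucc_inj]

lemma cyc_excNum (τ : Equiv.Perm (Fin N)) (k₀ : Fin N) :
    excNum (cyc k₀.castSucc τ)
      + (if ((τ.symm k₀ : Fin N) : ℕ) < ((k₀ : Fin N) : ℕ) then 1 else 0)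
      = excNum τ + 1 := by
  set j₀ := τ.symm k₀ with hj₀
  have hτj₀ : τ j₀ = k₀ := τ.apply_symm_apply k₀
  unfold excNum
  rw [Finset.card_filter, Finset.card_filter, Fin.sum_univ_castSucc]
  have hlast : (if ((Fin.last N : Fin (N+1)) : ℕ) < ((cyc k₀.castSucc τ (Fin.last N)) : ℕ) then 1 else 0) = 0 := by
    rw [cyc_apply_last]
    simp [Fin.last]
  rw [← Finset.sum_erase_add Finset.univ _ (Finset.mem_univ j₀),
      ← Finset.sum_erase_add Finset.univ
        (fun i : Fin N => if (i : ℕ) < ((τ i : Fin N) : ℕ) then 1 else 0) (Finset.mem_univ j₀)]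
  have herase : ∀ i ∈ Finset.univ.erase j₀,
      (if ((i.castSucc : Fin (N+1)) : ℕ) < ((cyc k₀.castSucc τ i.castSucc) : ℕ) then 1 else 0)
        = (if (i : ℕ) < ((τ i : Fin N) : ℕ) then 1 else 0) := by
    intro i hi
    have hne : τ i ≠ k₀ := by
      intro h
      exact (Finset.mem_erase.mp hi).1 (by rw [hj₀, ← h, Equiv.symm_apply_apply])
    rw [cyc_apply_castSucc, if_neg hne]
    simp
  rw [Finset.sum_congr rfl herase]
  have hj : (if ((j₀.castSucc : Fin (N+1)) : ℕ) < ((cyc k₀.castSucc τ j₀.castSucc) : ℕ) then 1 else 0) = 1 := by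
    rw [cyc_apply_castSucc, if_pos hτj₀]
    simp [Fin.last, Fin.castSucc, Fin.castAdd, Fin.castLE]
  rw [hj, hlast, hτj₀]
  omega

lemma cyc_aexcNum (τ : Equiv.Perm (Fin N)) (k₀ : Fin N) :
    aexcNum (cyc k₀.castSucc τ)
      + (if ((k₀ : Fin N) : ℕ) < ((τ.symm k₀ : Fin N) : ℕ) then 1 else 0)
      = aexcNum τ + 1 := by
  set j₀ := τ.symm k₀ with hj₀
  have hτj₀ : τ j₀ = k₀ := τ.apply_symm_apply k₀
  unfold aexcNum
  rw [Finset.card_filter, Finset.card_filter, Fin.sum_univ_castSucc]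
  have hlast : (if ((cyc k₀.castSucc τ (Fin.last N)) : ℕ) < ((Fin.last N : Fin (N+1)) : ℕ) then 1 else 0) = 1 := by
    rw [cyc_apply_last]
    simp [Fin.last]
  rw [← Finset.sum_erase_add Finset.univ _ (Finset.mem_univ j₀),
      ← Finset.sum_erase_add Finset.univ
        (fun i : Fin N => if ((τ i : Fin N) : ℕ) < (i : ℕ) then 1 else 0) (Finset.mem_univ j₀)]
  have herase : ∀ i ∈ Finset.univ.erase j₀,
      (if ((cyc k₀.castSucc τ i.castSucc) : ℕ) < ((i.castSucc : Fin (N+1)) : ℕ) then 1 else 0)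
        = (if ((τ i : Fin N) : ℕ) < (i : ℕ) then 1 else 0) := by
    intro i hi
    have hne : τ i ≠ k₀ := by
      intro h
      exact (Finset.mem_erase.mp hi).1 (by rw [hj₀, ← h, Equiv.symm_apply_apply])
    rw [cyc_apply_castSucc, if_neg hne]
    simp
  rw [Finset.sum_congr rfl herase]
  have hj : (if ((cyc k₀.castSucc τ j₀.castSucc) : ℕ) < ((j₀.castSucc : Fin (N+1)) : ℕ) then 1 else 0) = 0 := by
    rw [cyc_apply_castSucc, if_pos hτj₀]
    simp [Fin.last, Fin.castSucc, Fin.castAdd, Fin.castLE]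
  rw [hj, hlast, hτj₀]
  omega

lemma cyc_fixNum (τ : Equiv.Perm (Fin N)) (k₀ : Fin N) :
    fixNum (cyc k₀.castSucc τ)
      + (if τ (τ.symm k₀) = τ.symm k₀ then 1 else 0)
      = fixNum τ := by
  set j₀ := τ.symm k₀ with hj₀
  have hτj₀ : τ j₀ = k₀ := τ.apply_symm_apply k₀
  unfold fixNum
  rw [Finset.card_filter, Finset.card_filter, Fin.sum_univ_castSucc]
  have hlast : (if (cyc k₀.castSucc τ (Fin.last N)) = Fin.last N then 1 else 0) = 0 := by
    rw [cyc_apply_last, if_neg (Fin.castSucc_lt_last k₀).ne]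
  rw [← Finset.sum_erase_add Finset.univ _ (Finset.mem_univ j₀),
      ← Finset.sum_erase_add Finset.univ
        (fun i : Fin N => if τ i = i then 1 else 0) (Finset.mem_univ j₀)]
  have herase : ∀ i ∈ Finset.univ.erase j₀,
      (if (cyc k₀.castSucc τ i.castSucc) = i.castSucc then 1 else 0)
        = (if τ i = i then 1 else 0) := by
    intro i hi
    have hne : τ i ≠ k₀ := by
      intro h
      exact (Finset.mem_erase.mp hi).1 (by rw [hj₀, ← h, Equiv.symm_apply_apply])
    rw [cyc_apply_castSucc, if_neg hne]
    simp [Fin.castSucc_inj]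
  rw [Finset.sum_congr rfl herase]
  have hj : (if (cyc k₀.castSucc τ j₀.castSucc) = j₀.castSucc then 1 else 0) = 0 := by
    rw [cyc_apply_castSucc, if_pos hτj₀, if_neg (Fin.castSucc_lt_last j₀).ne']
  rw [hj, hlast, hτj₀]
  omega

lemma cyc_weight (τ : Equiv.Perm (Fin N)) (j₀ : Fin N) :
    (X 0 ^ excNum (cyc (τ j₀).castSucc τ) * X 1 ^ aexcNum (cyc (τ j₀).castSucc τ)
      * X 2 ^ fixNum (cyc (τ j₀).castSucc τ) : MvPolynomial (Fin 3) ℤ)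
    = (if (j₀ : ℕ) < ((τ j₀ : Fin N) : ℕ) then W3 (excNum τ) (aexcNum τ + 1) (fixNum τ) else 0)
      + (if ((τ j₀ : Fin N) : ℕ) < (j₀ : ℕ) then W3 (excNum τ + 1) (aexcNum τ) (fixNum τ) else 0)
      + (if τ j₀ = j₀ then W3 (excNum τ + 1) (aexcNum τ + 1) (fixNum τ - 1) else 0) := by
  have hsymm : τ.symm (τ j₀) = j₀ := τ.symm_apply_apply j₀
  have he := cyc_excNum τ (τ j₀)
  have ha := cyc_aexcNum τ (τ j₀)
  have hf := cyc_fixNum τ (τ j₀)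
  rw [hsymm] at he ha hf
  rcases Nat.lt_trichotomy (j₀ : ℕ) ((τ j₀ : Fin N) : ℕ) with h | h | h
  · have hne : τ j₀ ≠ j₀ := fun hh => by rw [hh] at h; omega
    rw [if_pos h, if_neg (by omega), if_neg hne]
    rw [if_pos h] at he
    rw [if_neg (by omega)] at ha
    rw [if_neg hne] at hf
    have h1 : excNum (cyc (τ j₀).castSucc τ) = excNum τ := by omega
    have h2 : aexcNum (cyc (τ j₀).castSucc τ) = aexcNum τ + 1 := by omega
    have h3 : fixNum (cyc (τ j₀).castSucc τ) = fixNum τ := by omega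
    rw [h1, h2, h3, W3, add_zero, add_zero]
  · have hfix : τ j₀ = j₀ := Fin.val_injective h.symm
    rw [if_neg (by omega), if_neg (by omega), if_pos hfix]
    rw [if_neg (by omega)] at he
    rw [if_neg (by omega)] at ha
    rw [if_pos hfix] at hf
    have h1 : excNum (cyc (τ j₀).castSucc τ) = excNum τ + 1 := by omega
    have h2 : aexcNum (cyc (τ j₀).castSucc τ) = aexcNum τ + 1 := by omega
    have h3 : fixNum (cyc (τ j₀).castSucc τ) = fixNum τ - 1 := by omega
    rw [h1, h2, h3, W3, zero_add, zero_add]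
  · have hne : τ j₀ ≠ j₀ := fun hh => by rw [hh] at h; omega
    rw [if_neg (by omega), if_pos h, if_neg hne]
    rw [if_neg (by omega)] at he
    rw [if_pos h] at ha
    rw [if_neg hne] at hf
    have h1 : excNum (cyc (τ j₀).castSucc τ) = excNum τ + 1 := by omega
    have h2 : aexcNum (cyc (τ j₀).castSucc τ) = aexcNum τ := by omega
    have h3 : fixNum (cyc (τ j₀).castSucc τ) = fixNum τ := by omega
    rw [h1, h2, h3, W3, add_zero, zero_add]

lemma cyc_sum (τ : Equiv.Perm (Fin N)) :
    ∑ k : Fin (N+1), (X 0 ^ excNum (cyc k τ) * X 1 ^ aexcNum (cyc k τ)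
        * X 2 ^ fixNum (cyc k τ) : MvPolynomial (Fin 3) ℤ)
    = X 2 * (X 0 ^ excNum τ * X 1 ^ aexcNum τ * X 2 ^ fixNum τ)
      + X 0 * X 1 * (pderiv 0 (X 0 ^ excNum τ * X 1 ^ aexcNum τ * X 2 ^ fixNum τ)
        + pderiv 1 (X 0 ^ excNum τ * X 1 ^ aexcNum τ * X 2 ^ fixNum τ)
        + pderiv 2 (X 0 ^ excNum τ * X 1 ^ aexcNum τ * X 2 ^ fixNum τ)) := by
  have hW : (X 0 ^ excNum τ * X 1 ^ aexcNum τ * X 2 ^ fixNum τ : MvPolynomial (Fin 3) ℤ)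
      = W3 (excNum τ) (aexcNum τ) (fixNum τ) := rfl
  rw [Fin.sum_univ_castSucc]
  have hlast : (X 0 ^ excNum (cyc (Fin.last N) τ) * X 1 ^ aexcNum (cyc (Fin.last N) τ)
      * X 2 ^ fixNum (cyc (Fin.last N) τ) : MvPolynomial (Fin 3) ℤ)
      = X 2 * W3 (excNum τ) (aexcNum τ) (fixNum τ) := by
    rw [cyc_last_eq, extP_excNum, extP_aexcNum, extP_fixNum, W3, pow_succ]
    ring
  rw [hlast]
  have hmain : ∑ k₀ : Fin N, (X 0 ^ excNum (cyc k₀.castSucc τ) * X 1 ^ aexcNum (cyc k₀.castSucc τ)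
      * X 2 ^ fixNum (cyc k₀.castSucc τ) : MvPolynomial (Fin 3) ℤ)
      = (excNum τ : MvPolynomial (Fin 3) ℤ) * W3 (excNum τ) (aexcNum τ + 1) (fixNum τ)
        + (aexcNum τ : MvPolynomial (Fin 3) ℤ) * W3 (excNum τ + 1) (aexcNum τ) (fixNum τ)
        + (fixNum τ : MvPolynomial (Fin 3) ℤ) * W3 (excNum τ + 1) (aexcNum τ + 1) (fixNum τ - 1) := by
    rw [← Equiv.sum_comp τ (fun k₀ : Fin N => (X 0 ^ excNum (cyc k₀.castSucc τ)
      * X 1 ^ aexcNum (cyc k₀.castSucc τ) * X 2 ^ fixNum (cyc k₀.castSucc τ)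
        : MvPolynomial (Fin 3) ℤ))]
    rw [Finset.sum_congr rfl (fun j₀ _ => cyc_weight τ j₀)]
    rw [Finset.sum_add_distrib, Finset.sum_add_distrib,
      ← Finset.sum_filter, ← Finset.sum_filter, ← Finset.sum_filter,
      Finset.sum_const, Finset.sum_const, Finset.sum_const]
    have c1 : (Finset.univ.filter fun j₀ : Fin N => (j₀ : ℕ) < ((τ j₀ : Fin N) : ℕ)).card
        = excNum τ := rfl
    have c2 : (Finset.univ.filter fun j₀ : Fin N => ((τ j₀ : Fin N) : ℕ) < (j₀ : ℕ)).card
        = aexcNum τ := rfl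
    have c3 : (Finset.univ.filter fun j₀ : Fin N => τ j₀ = j₀).card = fixNum τ := rfl
    rw [c1, c2, c3, nsmul_eq_mul, nsmul_eq_mul, nsmul_eq_mul]
  rw [hmain, hW, mono_deriv]
  ring

lemma excFix_rec (N : ℕ) :
    excFixPoly (N+1) = X 2 * excFixPoly N
      + X 0 * X 1 * (pderiv 0 (excFixPoly N) + pderiv 1 (excFixPoly N)
        + pderiv 2 (excFixPoly N)) := by
  unfold excFixPoly
  rw [sum_perm_cyc, Finset.mul_sum, map_sum, map_sum, map_sum,
    ← Finset.sum_add_distrib, ← Finset.sum_add_distrib, Finset.mul_sum,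
    ← Finset.sum_add_distrib]
  exact Finset.sum_congr rfl fun τ _ => cyc_sum τ

end CycRec

section WordRec

lemma permWord_le {N : ℕ} (σ : Equiv.Perm (Fin N)) (j : ℕ) : permWord σ j ≤ N := by
  by_cases h : j < N
  · exact (permWord_lt σ h).2
  · rw [permWord_zero_of_ge σ (Nat.le_of_not_lt h)]; exact Nat.zero_le _

lemma count_ins {N : ℕ} (σ : Equiv.Perm (Fin N)) (K : ℕ) (hK : K ≤ N)
    (P : ℕ → ℕ → Prop) [∀ a b : ℕ, Decidable (P a b)] :
    ((range N).filter fun j =>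
        P (permWord (insPerm (⟨K, Nat.lt_succ_of_le hK⟩ : Fin (N+1)) σ) j)
          (permWord (insPerm (⟨K, Nat.lt_succ_of_le hK⟩ : Fin (N+1)) σ) (j+1))).card
      + (if 1 ≤ K ∧ K < N ∧ P (permWord σ (K-1)) (permWord σ K) then 1 else 0)
    = ((range (N-1)).filter fun j => P (permWord σ j) (permWord σ (j+1))).card
      + (if 1 ≤ K ∧ P (permWord σ (K-1)) (N+1) then 1 else 0)
      + (if K < N ∧ P (N+1) (permWord σ K) then 1 else 0) := by
  set k : Fin (N+1) := ⟨K, Nat.lt_succ_of_le hK⟩ with hkdef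
  set w' := permWord (insPerm k σ) with hw'
  set w := permWord σ with hw
  set g : ℕ → ℕ := fun j => if P (w' j) (w' (j+1)) then 1 else 0 with hg
  set h : ℕ → ℕ := fun j => if P (w j) (w (j+1)) then 1 else 0 with hh
  rw [Finset.card_filter, Finset.card_filter]
  have wlt : ∀ j < K, w' j = w j := fun j hj => permWord_insPerm_lt k σ hj
  have weq : w' K = N + 1 := permWord_insPerm_eq k σ
  have wgt : ∀ j, K < j → j < N + 1 → w' j = w (j-1) :=
    fun j h1 h2 => permWord_insPerm_gt k σ h1 h2
  have split1 : ∑ j ∈ range N, g j = ∑ j ∈ Finset.Ico 0 K, g j + ∑ j ∈ Finset.Ico K N, g j := by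
    rw [Finset.range_eq_Ico, Finset.sum_Ico_consecutive _ (Nat.zero_le K) hK]
  have partA : ∑ j ∈ Finset.Ico 0 K, g j
      = ∑ j ∈ Finset.Ico 0 (K-1), h j
        + (if 1 ≤ K ∧ P (w (K-1)) (N+1) then 1 else 0) := by
    cases K with
    | zero => simp
    | succ K' =>
      rw [Finset.sum_Ico_succ_top (Nat.zero_le K'), Nat.add_sub_cancel]
      congr 1
      · refine Finset.sum_congr rfl fun j hj => ?_
        have hjK : j < K' := (Finset.mem_Ico.mp hj).2
        simp only [hg, hh]
        rw [wlt j (by omega), wlt (j+1) (by omega)]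
      · have h1 : w' K' = w K' := wlt K' (by omega)
        have h2 : w' (K' + 1) = N + 1 := weq
        simp only [hg, h1, h2]
        have hcond : P (w K') (N+1) ↔ (1 ≤ K' + 1 ∧ P (w K') (N+1)) := by
          constructor
          · exact fun hx => ⟨by omega, hx⟩
          · exact fun hx => hx.2
        rw [if_congr hcond rfl rfl]
  have partB : ∑ j ∈ Finset.Ico K N, g j
      = ∑ j ∈ Finset.Ico K (N-1), h j
        + (if K < N ∧ P (N+1) (w K) then 1 else 0) := by
    rcases Nat.lt_or_ge K N with hKN | hKN
    · rw [Finset.sum_eq_sum_Ico_succ_bot hKN]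
      have h2 : w' (K+1) = w K := by
        rw [wgt (K+1) (by omega) (by omega)]
        simp
      have hgK : g K = if K < N ∧ P (N+1) (w K) then 1 else 0 := by
        simp only [hg, weq, h2]
        have hcond : P (N+1) (w K) ↔ (K < N ∧ P (N+1) (w K)) := by
          constructor
          · exact fun hx => ⟨hKN, hx⟩
          · exact fun hx => hx.2
        rw [if_congr hcond rfl rfl]
      have hrest : ∑ j ∈ Finset.Ico (K+1) N, g j = ∑ j ∈ Finset.Ico K (N-1), h j := by
        have hpt : ∀ j ∈ Finset.Ico (K+1) N, g j = h (j-1) := by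
          intro j hj
          obtain ⟨hj1, hj2⟩ := Finset.mem_Ico.mp hj
          simp only [hg, hh]
          rw [wgt j (by omega) (by omega), wgt (j+1) (by omega) (by omega)]
          have he : j + 1 - 1 = (j-1) + 1 := by omega
          rw [he]
        rw [Finset.sum_congr rfl hpt, Finset.sum_Ico_eq_sum_range,
          Finset.sum_Ico_eq_sum_range]
        have hlen : N - (K+1) = N - 1 - K := by omega
        rw [hlen]
        refine Finset.sum_congr rfl fun i _ => ?_
        have he2 : K + 1 + i - 1 = K + i := by omega
        rw [he2]
      rw [hgK, hrest]
      omega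
    · have hKN' : K = N := le_antisymm hK hKN
      subst hKN'
      rw [Finset.Ico_self, Finset.Ico_eq_empty (by omega : ¬ (K < K - 1))]
      simp
  have splitOld : ∑ j ∈ range (N-1), h j
      = ∑ j ∈ Finset.Ico 0 (K-1), h j
        + (if 1 ≤ K ∧ K < N ∧ P (w (K-1)) (w K) then 1 else 0)
        + ∑ j ∈ Finset.Ico K (N-1), h j := by
    cases K with
    | zero =>
      rw [if_neg (fun hx => Nat.not_succ_le_zero 0 hx.1), Nat.zero_sub, Finset.Ico_self,
        Finset.sum_empty, Finset.range_eq_Ico, zero_add, zero_add]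
    | succ K' =>
      rw [Nat.add_sub_cancel]
      rcases Nat.lt_or_ge (K' + 1) N with hKN | hKN
      · rw [Finset.range_eq_Ico,
          ← Finset.sum_Ico_consecutive h (Nat.zero_le K') (by omega : K' ≤ N - 1),
          Finset.sum_eq_sum_Ico_succ_bot (by omega : K' < N - 1)]
        have hcond : (1 ≤ K' + 1 ∧ K' + 1 < N ∧ P (w K') (w (K'+1))) ↔ P (w K') (w (K'+1)) := by
          constructor
          · exact fun hx => hx.2.2
          · exact fun hx => ⟨by omega, hKN, hx⟩
        rw [if_congr hcond rfl rfl]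
        simp only [hh]
        omega
      · have hKN' : K' + 1 = N := le_antisymm hK hKN
        rw [if_neg (by omega)]
        rw [Finset.Ico_eq_empty (by omega : ¬ (K'+1 < N-1))]
        rw [Finset.sum_empty, add_zero, add_zero, Finset.range_eq_Ico]
        have he : N - 1 = K' := by omega
        rw [he]
  rw [split1, partA, partB, splitOld]
  omega

end WordRec

section ClassStats

variable {N : ℕ}

lemma statNum_card (π : Equiv.Perm (Fin (N+1))) :
    bascNum π = ((range N).filter fun j =>
        permWord π j + 2 ≤ permWord π (j+1)).card
    ∧ desNum π = ((range N).filter fun j =>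
        permWord π (j+1) < permWord π j).card
    ∧ sucNum π = ((range N).filter fun j =>
        permWord π (j+1) = permWord π j + 1).card := by
  unfold bascNum desNum sucNum
  rw [Nat.add_sub_cancel]
  exact ⟨rfl, rfl, rfl⟩

lemma stats_SX (σ : Equiv.Perm (Fin N)) {j : ℕ} (hj : j < N)
    (hmax : permWord σ j ≠ N) (hdes : permWord σ (j+1) < permWord σ j) :
    bascNum (insPerm (⟨j+1, Nat.lt_succ_of_le hj⟩ : Fin (N+1)) σ) = bascNum σ + 1
    ∧ desNum (insPerm (⟨j+1, Nat.lt_succ_of_le hj⟩ : Fin (N+1)) σ) = desNum σ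
    ∧ sucNum (insPerm (⟨j+1, Nat.lt_succ_of_le hj⟩ : Fin (N+1)) σ) = sucNum σ := by
  obtain ⟨hb1, hb2⟩ := permWord_lt σ hj
  have hw2 : permWord σ (j+1) ≤ N := permWord_le σ (j+1)
  have hB := count_ins σ (j+1) hj (fun a b => a + 2 ≤ b)
  have hD := count_ins σ (j+1) hj (fun a b => b < a)
  have hS := count_ins σ (j+1) hj (fun a b => b = a + 1)
  simp only [Nat.add_sub_cancel] at hB hD hS
  unfold bascNum desNum sucNum
  rw [Nat.add_sub_cancel]
  rcases Nat.lt_or_ge (j+1) N with hin | hlast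
  · obtain ⟨hw3, hw4⟩ := permWord_lt σ hin
    rw [if_neg (by omega), if_pos (by omega), if_neg (by omega)] at hB
    rw [if_pos (by omega), if_neg (by omega), if_pos (by omega)] at hD
    rw [if_neg (by omega), if_neg (by omega), if_neg (by omega)] at hS
    exact ⟨by omega, by omega, by omega⟩
  · have hw3 : permWord σ (j+1) = 0 := permWord_zero_of_ge σ hlast
    rw [if_neg (by omega), if_pos (by omega), if_neg (by omega)] at hB
    rw [if_neg (by omega), if_neg (by omega), if_neg (by omega)] at hD
    rw [if_neg (by omega), if_neg (by omega), if_neg (by omega)] at hS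
    exact ⟨by omega, by omega, by omega⟩

lemma stats_S1 (σ : Equiv.Perm (Fin N)) {j : ℕ} (hj : j < N)
    (hmax : permWord σ j = N) :
    bascNum (insPerm (⟨j+1, Nat.lt_succ_of_le hj⟩ : Fin (N+1)) σ) = bascNum σ
    ∧ desNum (insPerm (⟨j+1, Nat.lt_succ_of_le hj⟩ : Fin (N+1)) σ) = desNum σ
    ∧ sucNum (insPerm (⟨j+1, Nat.lt_succ_of_le hj⟩ : Fin (N+1)) σ) = sucNum σ + 1 := by
  obtain ⟨hb1, hb2⟩ := permWord_lt σ hj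
  have hw2 : permWord σ (j+1) ≤ N := permWord_le σ (j+1)
  have hB := count_ins σ (j+1) hj (fun a b => a + 2 ≤ b)
  have hD := count_ins σ (j+1) hj (fun a b => b < a)
  have hS := count_ins σ (j+1) hj (fun a b => b = a + 1)
  simp only [Nat.add_sub_cancel] at hB hD hS
  unfold bascNum desNum sucNum
  rw [Nat.add_sub_cancel]
  rcases Nat.lt_or_ge (j+1) N with hin | hlast
  · have hne : permWord σ (j+1) ≠ permWord σ j := fun he => by
      have := permWord_inj σ hin hj he; omega
    rw [if_neg (by omega), if_neg (by omega), if_neg (by omega)] at hB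
    rw [if_pos (by omega), if_neg (by omega), if_pos (by omega)] at hD
    rw [if_neg (by omega), if_pos (by omega), if_neg (by omega)] at hS
    exact ⟨by omega, by omega, by omega⟩
  · have hw3 : permWord σ (j+1) = 0 := permWord_zero_of_ge σ hlast
    rw [if_neg (by omega), if_neg (by omega), if_neg (by omega)] at hB
    rw [if_neg (by omega), if_neg (by omega), if_neg (by omega)] at hD
    rw [if_neg (by omega), if_pos (by omega), if_neg (by omega)] at hS
    exact ⟨by omega, by omega, by omega⟩

lemma stats_SY (σ : Equiv.Perm (Fin N)) {j : ℕ} (hj : j < N)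
    (hbasc : permWord σ j + 2 ≤ permWord σ (j+1)) :
    bascNum (insPerm (⟨j+1, Nat.lt_succ_of_le hj⟩ : Fin (N+1)) σ) = bascNum σ
    ∧ desNum (insPerm (⟨j+1, Nat.lt_succ_of_le hj⟩ : Fin (N+1)) σ) = desNum σ + 1
    ∧ sucNum (insPerm (⟨j+1, Nat.lt_succ_of_le hj⟩ : Fin (N+1)) σ) = sucNum σ := by
  obtain ⟨hb1, hb2⟩ := permWord_lt σ hj
  have hw2 : permWord σ (j+1) ≤ N := permWord_le σ (j+1)
  have hin : j + 1 < N := by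
    rcases Nat.lt_or_ge (j+1) N with hin | hlast
    · exact hin
    · have := permWord_zero_of_ge σ hlast; omega
  have hB := count_ins σ (j+1) hj (fun a b => a + 2 ≤ b)
  have hD := count_ins σ (j+1) hj (fun a b => b < a)
  have hS := count_ins σ (j+1) hj (fun a b => b = a + 1)
  simp only [Nat.add_sub_cancel] at hB hD hS
  unfold bascNum desNum sucNum
  rw [Nat.add_sub_cancel]
  rw [if_pos (by omega), if_pos (by omega), if_neg (by omega)] at hB
  rw [if_neg (by omega), if_neg (by omega), if_pos (by omega)] at hD
  rw [if_neg (by omega), if_neg (by omega), if_neg (by omega)] at hS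
  exact ⟨by omega, by omega, by omega⟩

lemma stats_SS (σ : Equiv.Perm (Fin N)) {j : ℕ} (hj : j < N)
    (hsuc : permWord σ (j+1) = permWord σ j + 1) :
    bascNum (insPerm (⟨j+1, Nat.lt_succ_of_le hj⟩ : Fin (N+1)) σ) = bascNum σ + 1
    ∧ desNum (insPerm (⟨j+1, Nat.lt_succ_of_le hj⟩ : Fin (N+1)) σ) = desNum σ + 1
    ∧ sucNum (insPerm (⟨j+1, Nat.lt_succ_of_le hj⟩ : Fin (N+1)) σ) + 1 = sucNum σ := by
  obtain ⟨hb1, hb2⟩ := permWord_lt σ hj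
  have hw2 : permWord σ (j+1) ≤ N := permWord_le σ (j+1)
  have hin : j + 1 < N := by
    rcases Nat.lt_or_ge (j+1) N with hin | hlast
    · exact hin
    · have := permWord_zero_of_ge σ hlast; omega
  have hB := count_ins σ (j+1) hj (fun a b => a + 2 ≤ b)
  have hD := count_ins σ (j+1) hj (fun a b => b < a)
  have hS := count_ins σ (j+1) hj (fun a b => b = a + 1)
  simp only [Nat.add_sub_cancel] at hB hD hS
  unfold bascNum desNum sucNum
  rw [Nat.add_sub_cancel]
  rw [if_neg (by omega), if_pos (by omega), if_neg (by omega)] at hB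
  rw [if_neg (by omega), if_neg (by omega), if_pos (by omega)] at hD
  rw [if_pos (by omega), if_neg (by omega), if_neg (by omega)] at hS
  exact ⟨by omega, by omega, by omega⟩

lemma stats_K0 (σ : Equiv.Perm (Fin N)) (hN : 1 ≤ N) :
    bascNum (insPerm (⟨0, Nat.lt_succ_of_le (Nat.zero_le N)⟩ : Fin (N+1)) σ) = bascNum σ
    ∧ desNum (insPerm (⟨0, Nat.lt_succ_of_le (Nat.zero_le N)⟩ : Fin (N+1)) σ) = desNum σ + 1
    ∧ sucNum (insPerm (⟨0, Nat.lt_succ_of_le (Nat.zero_le N)⟩ : Fin (N+1)) σ) = sucNum σ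
    ∧ ascNum (insPerm (⟨0, Nat.lt_succ_of_le (Nat.zero_le N)⟩ : Fin (N+1)) σ) = ascNum σ := by
  obtain ⟨hb1, hb2⟩ := permWord_lt σ (by omega : 0 < N)
  have hB := count_ins σ 0 (Nat.zero_le N) (fun a b => a + 2 ≤ b)
  have hD := count_ins σ 0 (Nat.zero_le N) (fun a b => b < a)
  have hS := count_ins σ 0 (Nat.zero_le N) (fun a b => b = a + 1)
  have hA := count_ins σ 0 (Nat.zero_le N) (fun a b => a < b)
  unfold bascNum desNum sucNum ascNum
  rw [Nat.add_sub_cancel]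
  rw [if_neg (by omega), if_neg (by omega), if_neg (by omega)] at hB
  rw [if_neg (by omega), if_neg (by omega), if_pos (by omega)] at hD
  rw [if_neg (by omega), if_neg (by omega), if_neg (by omega)] at hS
  rw [if_neg (by omega), if_neg (by omega), if_neg (by omega)] at hA
  exact ⟨by omega, by omega, by omega, by omega⟩

lemma stats_X3 (σ : Equiv.Perm (Fin N)) {j : ℕ} (hj : j < N)
    (hdes : permWord σ (j+1) < permWord σ j) :
    ascNum (insPerm (⟨j+1, Nat.lt_succ_of_le hj⟩ : Fin (N+1)) σ) = ascNum σ + 1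
    ∧ desNum (insPerm (⟨j+1, Nat.lt_succ_of_le hj⟩ : Fin (N+1)) σ) = desNum σ := by
  obtain ⟨hb1, hb2⟩ := permWord_lt σ hj
  have hw2 : permWord σ (j+1) ≤ N := permWord_le σ (j+1)
  have hA := count_ins σ (j+1) hj (fun a b => a < b)
  have hD := count_ins σ (j+1) hj (fun a b => b < a)
  simp only [Nat.add_sub_cancel] at hA hD
  unfold ascNum desNum
  rw [Nat.add_sub_cancel]
  rcases Nat.lt_or_ge (j+1) N with hin | hlast
  · rw [if_neg (by omega), if_pos (by omega), if_neg (by omega)] at hA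
    rw [if_pos (by omega), if_neg (by omega), if_pos (by omega)] at hD
    exact ⟨by omega, by omega⟩
  · have hw3 : permWord σ (j+1) = 0 := permWord_zero_of_ge σ hlast
    rw [if_neg (by omega), if_pos (by omega), if_neg (by omega)] at hA
    rw [if_neg (by omega), if_neg (by omega), if_neg (by omega)] at hD
    exact ⟨by omega, by omega⟩

lemma stats_Y3 (σ : Equiv.Perm (Fin N)) {j : ℕ} (hj : j < N)
    (hasc : permWord σ j < permWord σ (j+1)) :
    ascNum (insPerm (⟨j+1, Nat.lt_succ_of_le hj⟩ : Fin (N+1)) σ) = ascNum σ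
    ∧ desNum (insPerm (⟨j+1, Nat.lt_succ_of_le hj⟩ : Fin (N+1)) σ) = desNum σ + 1 := by
  obtain ⟨hb1, hb2⟩ := permWord_lt σ hj
  have hw2 : permWord σ (j+1) ≤ N := permWord_le σ (j+1)
  have hin : j + 1 < N := by
    rcases Nat.lt_or_ge (j+1) N with hin | hlast
    · exact hin
    · have := permWord_zero_of_ge σ hlast; omega
  have hA := count_ins σ (j+1) hj (fun a b => a < b)
  have hD := count_ins σ (j+1) hj (fun a b => b < a)
  simp only [Nat.add_sub_cancel] at hA hD
  unfold ascNum desNum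
  rw [Nat.add_sub_cancel]
  rw [if_pos (by omega), if_pos (by omega), if_neg (by omega)] at hA
  rw [if_neg (by omega), if_neg (by omega), if_pos (by omega)] at hD
  exact ⟨by omega, by omega⟩

end ClassStats

section CardLemmas

variable {N : ℕ}

lemma exists_max (σ : Equiv.Perm (Fin N)) (hN : 1 ≤ N) :
    ∃ p, p < N ∧ permWord σ p = N ∧ ∀ j, j < N → permWord σ j = N → j = p := by
  have hlt : N - 1 < N := by omega
  refine ⟨((σ.symm ⟨N-1, hlt⟩ : Fin N) : ℕ), Fin.isLt _, ?_, ?_⟩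
  · have : permWord σ ((σ.symm ⟨N-1, hlt⟩ : Fin N) : ℕ)
        = ((σ (σ.symm ⟨N-1, hlt⟩) : Fin N) : ℕ) + 1 := by
      simp [permWord, Fin.isLt]
    rw [this, Equiv.apply_symm_apply]
    simp
    omega
  · intro j hj hw
    have hwp : permWord σ ((σ.symm ⟨N-1, hlt⟩ : Fin N) : ℕ)
        = ((σ (σ.symm ⟨N-1, hlt⟩) : Fin N) : ℕ) + 1 := by
      simp [permWord, Fin.isLt]
    apply permWord_inj σ hj (Fin.isLt _)
    rw [hw, hwp, Equiv.apply_symm_apply]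
    simp
    omega

lemma cardX (σ : Equiv.Perm (Fin N)) (hN : 1 ≤ N) :
    ((range N).filter fun j => ¬(permWord σ j = N) ∧ permWord σ (j+1) < permWord σ j).card
      = desNum σ := by
  obtain ⟨p, hpN, hwp, huniq⟩ := exists_max σ hN
  unfold desNum
  refine Finset.card_bij' (fun a _ => if a = N - 1 then p else a)
    (fun a _ => if a = p then N - 1 else a) ?_ ?_ ?_ ?_
  · intro a ha
    have hmf := Finset.mem_filter.mp ha
    have haN := Finset.mem_range.mp hmf.1
    have hamax := hmf.2.1
    have hades := hmf.2.2
    rcases eq_or_ne a (N-1) with h1 | h1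
    · rw [if_pos h1]
      subst h1
      have hpn : p ≠ N - 1 := fun he => hamax (he ▸ hwp)
      have hplt : p < N - 1 := by omega
      refine Finset.mem_filter.mpr ⟨Finset.mem_range.mpr hplt, ?_⟩
      have h2 : permWord σ (p+1) ≤ N := permWord_le σ (p+1)
      have h3 : permWord σ (p+1) ≠ N := fun he => by
        have := huniq (p+1) (by omega) he; omega
      omega
    · rw [if_neg h1]
      have h4 : a < N - 1 := by omega
      exact Finset.mem_filter.mpr ⟨Finset.mem_range.mpr h4, hades⟩
  · intro a ha
    have hmf := Finset.mem_filter.mp ha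
    have haN := Finset.mem_range.mp hmf.1
    have hades := hmf.2
    rcases eq_or_ne a p with h1 | h1
    · rw [if_pos h1]
      refine Finset.mem_filter.mpr ⟨Finset.mem_range.mpr (by omega), ?_, ?_⟩
      · intro he
        have := huniq (N-1) (by omega) he
        omega
      · have h5 : permWord σ ((N-1)+1) = 0 := permWord_zero_of_ge σ (by omega)
        have h6 := (permWord_lt σ (by omega : N - 1 < N)).1
        omega
    · rw [if_neg h1]
      refine Finset.mem_filter.mpr ⟨Finset.mem_range.mpr (by omega), ?_, hades⟩
      intro he
      exact h1 (huniq a (by omega) he)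
  · intro a ha
    have hmf := Finset.mem_filter.mp ha
    have haN := Finset.mem_range.mp hmf.1
    have hamax := hmf.2.1
    have hades := hmf.2.2
    rcases eq_or_ne a (N-1) with h1 | h1
    · rw [if_pos h1, if_pos rfl, h1]
    · rw [if_neg h1, if_neg (fun he : a = p => hamax (by rw [he]; exact hwp))]
  · intro a ha
    have hmf := Finset.mem_filter.mp ha
    have haN := Finset.mem_range.mp hmf.1
    have hades := hmf.2
    rcases eq_or_ne a p with h1 | h1
    · rw [if_pos h1, if_pos rfl, h1]
    · rw [if_neg h1, if_neg (by omega : ¬ a = N - 1)]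

lemma cardY (σ : Equiv.Perm (Fin N)) :
    ((range N).filter fun j => ¬(permWord σ j = N) ∧ ¬(permWord σ (j+1) < permWord σ j)
        ∧ permWord σ j + 2 ≤ permWord σ (j+1)).card = bascNum σ := by
  unfold bascNum
  congr 1
  ext j
  simp only [Finset.mem_filter, Finset.mem_range]
  constructor
  · rintro ⟨hjN, hmax, hnd, hbasc⟩
    have h2 : permWord σ (j+1) ≤ N := permWord_le σ (j+1)
    have hin : j + 1 < N := by
      rcases Nat.lt_or_ge (j+1) N with hin | hlast
      · exact hin
      · have := permWord_zero_of_ge σ hlast; omega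
    exact ⟨by omega, hbasc⟩
  · rintro ⟨hjN, hbasc⟩
    have h2 : permWord σ (j+1) ≤ N := permWord_le σ (j+1)
    refine ⟨by omega, by omega, by omega, hbasc⟩

lemma cardSS2 (σ : Equiv.Perm (Fin N)) :
    ((range N).filter fun j => ¬(permWord σ j = N) ∧ ¬(permWord σ (j+1) < permWord σ j)
        ∧ ¬(permWord σ j + 2 ≤ permWord σ (j+1))).card = sucNum σ := by
  unfold sucNum
  congr 1
  ext j
  simp only [Finset.mem_filter, Finset.mem_range]
  constructor
  · rintro ⟨hjN, hmax, hnd, hnb⟩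
    obtain ⟨h1, h2⟩ := permWord_lt σ hjN
    have hin : j + 1 < N := by
      rcases Nat.lt_or_ge (j+1) N with hin | hlast
      · exact hin
      · have := permWord_zero_of_ge σ hlast; omega
    have hne : permWord σ (j+1) ≠ permWord σ j := fun he => by
      have := permWord_inj σ hin hjN he; omega
    exact ⟨by omega, by omega⟩
  · rintro ⟨hjN, hsuc⟩
    have h2 : permWord σ (j+1) ≤ N := permWord_le σ (j+1)
    refine ⟨by omega, by omega, by omega, by omega⟩

lemma cardX3 (σ : Equiv.Perm (Fin N)) (hN : 1 ≤ N) :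
    ((range N).filter fun j => permWord σ (j+1) < permWord σ j).card = desNum σ + 1 := by
  unfold desNum
  have hset : ((range N).filter fun j => permWord σ (j+1) < permWord σ j)
      = insert (N-1) ((range (N-1)).filter fun j => permWord σ (j+1) < permWord σ j) := by
    ext j
    simp only [Finset.mem_filter, Finset.mem_range, Finset.mem_insert]
    constructor
    · rintro ⟨hjN, hdes⟩
      rcases eq_or_ne j (N-1) with h1 | h1
      · exact Or.inl h1
      · exact Or.inr ⟨by omega, hdes⟩
    · rintro (h1 | ⟨h1, h2⟩)
      · subst h1
        have h5 : permWord σ ((N-1)+1) = 0 := permWord_zero_of_ge σ (by omega)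
        have h6 := (permWord_lt σ (by omega : N - 1 < N)).1
        exact ⟨by omega, by omega⟩
      · exact ⟨by omega, h2⟩
  rw [hset, Finset.card_insert_of_notMem (fun hmem => by
    have := Finset.mem_range.mp (Finset.mem_filter.mp hmem).1
    omega)]

lemma cardY3 (σ : Equiv.Perm (Fin N)) :
    ((range N).filter fun j => permWord σ j < permWord σ (j+1)).card = ascNum σ := by
  unfold ascNum
  congr 1
  ext j
  simp only [Finset.mem_filter, Finset.mem_range]
  constructor
  · rintro ⟨hjN, hasc⟩
    have hin : j + 1 < N := by
      rcases Nat.lt_or_ge (j+1) N with hin | hlast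
      · exact hin
      · have := permWord_zero_of_ge σ hlast; omega
    exact ⟨by omega, hasc⟩
  · rintro ⟨hjN, hasc⟩
    exact ⟨by omega, hasc⟩

lemma cardS1' (σ : Equiv.Perm (Fin N)) (hN : 1 ≤ N) :
    ((range N).filter fun j => permWord σ j = N).card = 1 := by
  obtain ⟨p, hpN, hwp, huniq⟩ := exists_max σ hN
  rw [Finset.card_eq_one]
  refine ⟨p, ?_⟩
  ext j
  simp only [Finset.mem_filter, Finset.mem_range, Finset.mem_singleton]
  constructor
  · rintro ⟨h1, h2⟩
    exact huniq j h1 h2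
  · rintro rfl
    exact ⟨hpN, hwp⟩

end CardLemmas

section PerSigma

variable {N : ℕ}

lemma ins_sum_triv (σ : Equiv.Perm (Fin N)) (hN : 1 ≤ N) :
    ∑ k : Fin (N+1), (X 0 ^ bascNum (insPerm k σ) * X 1 ^ desNum (insPerm k σ)
        * X 2 ^ sucNum (insPerm k σ) : MvPolynomial (Fin 3) ℤ)
    = (X 1 + X 2) * W3 (bascNum σ) (desNum σ) (sucNum σ)
      + X 0 * X 1 * (pderiv 0 (W3 (bascNum σ) (desNum σ) (sucNum σ))
        + pderiv 1 (W3 (bascNum σ) (desNum σ) (sucNum σ))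
        + pderiv 2 (W3 (bascNum σ) (desNum σ) (sucNum σ))) := by
  set b := bascNum σ with hb
  set d := desNum σ with hd
  set c := sucNum σ with hc
  rw [Fin.sum_univ_succ]
  have h0 : (X 0 ^ bascNum (insPerm (0 : Fin (N+1)) σ) * X 1 ^ desNum (insPerm (0 : Fin (N+1)) σ)
      * X 2 ^ sucNum (insPerm (0 : Fin (N+1)) σ) : MvPolynomial (Fin 3) ℤ)
      = W3 b (d+1) c := by
    obtain ⟨e1, e2, e3, _⟩ := stats_K0 σ hN
    show (X 0 ^ bascNum (insPerm (⟨0, Nat.lt_succ_of_le (Nat.zero_le N)⟩ : Fin (N+1)) σ)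
      * X 1 ^ desNum (insPerm (⟨0, Nat.lt_succ_of_le (Nat.zero_le N)⟩ : Fin (N+1)) σ)
      * X 2 ^ sucNum (insPerm (⟨0, Nat.lt_succ_of_le (Nat.zero_le N)⟩ : Fin (N+1)) σ)
        : MvPolynomial (Fin 3) ℤ) = W3 b (d+1) c
    rw [e1, e2, e3, W3]
  set G : ℕ → MvPolynomial (Fin 3) ℤ := fun j : ℕ =>
          (if permWord σ j = N then W3 b d (c+1) else 0)
          + (if ¬(permWord σ j = N) ∧ permWord σ (j+1) < permWord σ j
              then W3 (b+1) d c else 0)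
          + (if ¬(permWord σ j = N) ∧ ¬(permWord σ (j+1) < permWord σ j)
                ∧ permWord σ j + 2 ≤ permWord σ (j+1)
              then W3 b (d+1) c else 0)
          + (if ¬(permWord σ j = N) ∧ ¬(permWord σ (j+1) < permWord σ j)
                ∧ ¬(permWord σ j + 2 ≤ permWord σ (j+1))
              then W3 (b+1) (d+1) (c-1) else 0) with hG
  have hpt : ∀ i : Fin N,
      (X 0 ^ bascNum (insPerm i.succ σ) * X 1 ^ desNum (insPerm i.succ σ)
        * X 2 ^ sucNum (insPerm i.succ σ) : MvPolynomial (Fin 3) ℤ)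
      = G ((i : Fin N) : ℕ) := by
    intro i
    set j : ℕ := ((i : Fin N) : ℕ) with hjdef
    have hj : j < N := i.isLt
    show (X 0 ^ bascNum (insPerm (⟨j+1, Nat.lt_succ_of_le hj⟩ : Fin (N+1)) σ)
      * X 1 ^ desNum (insPerm (⟨j+1, Nat.lt_succ_of_le hj⟩ : Fin (N+1)) σ)
      * X 2 ^ sucNum (insPerm (⟨j+1, Nat.lt_succ_of_le hj⟩ : Fin (N+1)) σ)
        : MvPolynomial (Fin 3) ℤ) = _
    rw [hG]
    dsimp only
    by_cases h1 : permWord σ j = N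
    · obtain ⟨e1, e2, e3⟩ := stats_S1 σ hj h1
      rw [e1, e2, e3, if_pos h1, if_neg (by tauto), if_neg (by tauto), if_neg (by tauto)]
      rw [W3, add_zero, add_zero, add_zero]
    · by_cases h2 : permWord σ (j+1) < permWord σ j
      · obtain ⟨e1, e2, e3⟩ := stats_SX σ hj h1 h2
        rw [e1, e2, e3, if_neg h1, if_pos ⟨h1, h2⟩, if_neg (by tauto), if_neg (by tauto)]
        rw [W3, add_zero, add_zero, zero_add]
      · by_cases h3 : permWord σ j + 2 ≤ permWord σ (j+1)
        · obtain ⟨e1, e2, e3⟩ := stats_SY σ hj h3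
          rw [e1, e2, e3, if_neg h1, if_neg (by tauto), if_pos ⟨h1, h2, h3⟩, if_neg (by tauto)]
          rw [W3, add_zero, zero_add, zero_add]
        · have hsuc : permWord σ (j+1) = permWord σ j + 1 := by
            obtain ⟨hw1, hw2⟩ := permWord_lt σ hj
            have hw3 : permWord σ (j+1) ≤ N := permWord_le σ (j+1)
            have hin : j + 1 < N := by
              rcases Nat.lt_or_ge (j+1) N with hin | hlast
              · exact hin
              · have := permWord_zero_of_ge σ hlast; omega
            have hne : permWord σ (j+1) ≠ permWord σ j := fun he => by
              have := permWord_inj σ hin hj he; omega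
            omega
          obtain ⟨e1, e2, e3⟩ := stats_SS σ hj hsuc
          have e3' : sucNum (insPerm (⟨j+1, Nat.lt_succ_of_le hj⟩ : Fin (N+1)) σ) = c - 1 := by
            omega
          have hcpos : 1 ≤ c := by omega
          rw [e1, e2, e3', if_neg h1, if_neg (by tauto), if_neg (by tauto),
            if_pos ⟨h1, h2, h3⟩]
          rw [W3, zero_add, zero_add, zero_add]
  rw [Finset.sum_congr rfl (fun i _ => hpt i), Fin.sum_univ_eq_sum_range G N, hG]
  rw [Finset.sum_add_distrib, Finset.sum_add_distrib, Finset.sum_add_distrib,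
    ← Finset.sum_filter, ← Finset.sum_filter, ← Finset.sum_filter, ← Finset.sum_filter,
    Finset.sum_const, Finset.sum_const, Finset.sum_const, Finset.sum_const,
    cardS1' σ hN, cardX σ hN, cardY σ, cardSS2 σ]
  rw [h0, ← hb, ← hd, ← hc]
  rw [one_nsmul, nsmul_eq_mul, nsmul_eq_mul, nsmul_eq_mul, mono_deriv]
  have hs : (W3 b d (c+1) : MvPolynomial (Fin 3) ℤ) = X 2 * W3 b d c := by
    rw [W3, W3, pow_succ]; ring
  have hy : (W3 b (d+1) c : MvPolynomial (Fin 3) ℤ) = X 1 * W3 b d c := by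
    rw [W3, W3, pow_succ]; ring
  rw [hs, hy]
  ring

end PerSigma

section BivRec

lemma triv_rec (N : ℕ) (hN : 1 ≤ N) :
    trivEuler (N+1) = (X 1 + X 2) * trivEuler N
      + X 0 * X 1 * (pderiv 0 (trivEuler N) + pderiv 1 (trivEuler N)
        + pderiv 2 (trivEuler N)) := by
  unfold trivEuler
  rw [sum_perm_succ, Finset.mul_sum, map_sum, map_sum, map_sum,
    ← Finset.sum_add_distrib, ← Finset.sum_add_distrib, Finset.mul_sum,
    ← Finset.sum_add_distrib]
  exact Finset.sum_congr rfl fun σ _ => ins_sum_triv σ hN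

lemma mono_deriv2 (a d : ℕ) :
    X 0 * X 1 * (pderiv 0 (X 0 ^ a * X 1 ^ (d+1) : MvPolynomial (Fin 3) ℤ)
      + pderiv 1 (X 0 ^ a * X 1 ^ (d+1) : MvPolynomial (Fin 3) ℤ)
      + pderiv 2 (X 0 ^ a * X 1 ^ (d+1) : MvPolynomial (Fin 3) ℤ))
    = (a : MvPolynomial (Fin 3) ℤ) * (X 0 ^ a * X 1 ^ (d+2))
      + ((d+1 : ℕ) : MvPolynomial (Fin 3) ℤ) * (X 0 ^ (a+1) * X 1 ^ (d+1)) := by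
  have h0 : pderiv 0 (X 0 ^ a * X 1 ^ (d+1) : MvPolynomial (Fin 3) ℤ)
      = ((a : MvPolynomial (Fin 3) ℤ) * X 0 ^ (a-1)) * X 1 ^ (d+1) := by
    simp [pderiv_mul, pderiv_pow_self, pderiv_pow, Fin.ne_of_val_ne]
    ring
  have h1 : pderiv 1 (X 0 ^ a * X 1 ^ (d+1) : MvPolynomial (Fin 3) ℤ)
      = X 0 ^ a * (((d+1 : ℕ) : MvPolynomial (Fin 3) ℤ) * X 1 ^ d) := by
    simp [pderiv_mul, pderiv_pow_self, pderiv_pow, Fin.ne_of_val_ne]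
  have h2 : pderiv 2 (X 0 ^ a * X 1 ^ (d+1) : MvPolynomial (Fin 3) ℤ) = 0 := by
    simp [pderiv_mul, pderiv_pow_self, pderiv_pow, Fin.ne_of_val_ne]
  rw [h0, h1, h2]
  have e0 := cast_mul_pow_pred 0 a
  push_cast
  push_cast at e0
  linear_combination (X 1 ^ (d+2) : MvPolynomial (Fin 3) ℤ) * e0

lemma ins_sum_biv {N : ℕ} (σ : Equiv.Perm (Fin N)) (hN : 1 ≤ N) :
    ∑ k : Fin (N+1), (X 0 ^ ascNum (insPerm k σ)
        * X 1 ^ (desNum (insPerm k σ) + 1) : MvPolynomial (Fin 3) ℤ)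
    = X 1 * (X 0 ^ ascNum σ * X 1 ^ (desNum σ + 1))
      + X 0 * X 1 * (pderiv 0 (X 0 ^ ascNum σ * X 1 ^ (desNum σ + 1))
        + pderiv 1 (X 0 ^ ascNum σ * X 1 ^ (desNum σ + 1))
        + pderiv 2 (X 0 ^ ascNum σ * X 1 ^ (desNum σ + 1))) := by
  set a := ascNum σ with ha
  set d := desNum σ with hd
  rw [Fin.sum_univ_succ]
  have h0 : (X 0 ^ ascNum (insPerm (0 : Fin (N+1)) σ)
      * X 1 ^ (desNum (insPerm (0 : Fin (N+1)) σ) + 1) : MvPolynomial (Fin 3) ℤ)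
      = X 0 ^ a * X 1 ^ (d+2) := by
    obtain ⟨_, e2, _, e4⟩ := stats_K0 σ hN
    show (X 0 ^ ascNum (insPerm (⟨0, Nat.lt_succ_of_le (Nat.zero_le N)⟩ : Fin (N+1)) σ)
      * X 1 ^ (desNum (insPerm (⟨0, Nat.lt_succ_of_le (Nat.zero_le N)⟩ : Fin (N+1)) σ) + 1)
        : MvPolynomial (Fin 3) ℤ) = X 0 ^ a * X 1 ^ (d+2)
    rw [e2, e4]
  set G : ℕ → MvPolynomial (Fin 3) ℤ := fun j : ℕ =>
      (if permWord σ (j+1) < permWord σ j then X 0 ^ (a+1) * X 1 ^ (d+1) else 0)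
      + (if permWord σ j < permWord σ (j+1) then X 0 ^ a * X 1 ^ (d+2) else 0) with hG
  have hpt : ∀ i : Fin N,
      (X 0 ^ ascNum (insPerm i.succ σ) * X 1 ^ (desNum (insPerm i.succ σ) + 1)
        : MvPolynomial (Fin 3) ℤ) = G ((i : Fin N) : ℕ) := by
    intro i
    set j : ℕ := ((i : Fin N) : ℕ) with hjdef
    have hj : j < N := i.isLt
    show (X 0 ^ ascNum (insPerm (⟨j+1, Nat.lt_succ_of_le hj⟩ : Fin (N+1)) σ)
      * X 1 ^ (desNum (insPerm (⟨j+1, Nat.lt_succ_of_le hj⟩ : Fin (N+1)) σ) + 1)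
        : MvPolynomial (Fin 3) ℤ) = _
    rw [hG]
    dsimp only
    by_cases h1 : permWord σ (j+1) < permWord σ j
    · obtain ⟨e1, e2⟩ := stats_X3 σ hj h1
      rw [e1, e2, if_pos h1, if_neg (by omega), add_zero]
    · have hasc : permWord σ j < permWord σ (j+1) := by
        obtain ⟨hw1, hw2⟩ := permWord_lt σ hj
        have hw3 : permWord σ (j+1) ≤ N := permWord_le σ (j+1)
        have hin : j + 1 < N := by
          rcases Nat.lt_or_ge (j+1) N with hin | hlast
          · exact hin
          · have := permWord_zero_of_ge σ hlast; omega
        have hne : permWord σ (j+1) ≠ permWord σ j := fun he => by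
          have := permWord_inj σ hin hj he; omega
        omega
      obtain ⟨e1, e2⟩ := stats_Y3 σ hj hasc
      rw [e1, e2, if_neg h1, if_pos hasc, zero_add]
  rw [Finset.sum_congr rfl (fun i _ => hpt i), Fin.sum_univ_eq_sum_range G N, hG]
  rw [Finset.sum_add_distrib, ← Finset.sum_filter, ← Finset.sum_filter,
    Finset.sum_const, Finset.sum_const, cardX3 σ hN, cardY3 σ]
  rw [h0, nsmul_eq_mul, nsmul_eq_mul, mono_deriv2]
  push_cast
  ring

lemma biv_rec_all (m : ℕ) :
    bivEuler (m+1) = X 1 * bivEuler m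
      + X 0 * X 1 * (pderiv 0 (bivEuler m) + pderiv 1 (bivEuler m)
        + pderiv 2 (bivEuler m)) := by
  cases m with
  | zero =>
    show (∑ π : Equiv.Perm (Fin 1), (X 0 ^ ascNum π * X 1 ^ (desNum π + 1)
        : MvPolynomial (Fin 3) ℤ))
      = X 1 * (1 : MvPolynomial (Fin 3) ℤ)
        + X 0 * X 1 * (pderiv 0 (1 : MvPolynomial (Fin 3) ℤ) + pderiv 1 1 + pderiv 2 1)
    rw [Fintype.sum_unique]
    have h1 : ascNum (default : Equiv.Perm (Fin 1)) = 0 := rfl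
    have h2 : desNum (default : Equiv.Perm (Fin 1)) = 0 := rfl
    rw [h1, h2, pderiv_one]
    simp
  | succ M =>
    show (∑ π : Equiv.Perm (Fin (M+2)), (X 0 ^ ascNum π * X 1 ^ (desNum π + 1)
        : MvPolynomial (Fin 3) ℤ))
      = X 1 * (∑ π : Equiv.Perm (Fin (M+1)), (X 0 ^ ascNum π * X 1 ^ (desNum π + 1)
        : MvPolynomial (Fin 3) ℤ))
        + X 0 * X 1 * (pderiv 0 (∑ π : Equiv.Perm (Fin (M+1)), (X 0 ^ ascNum π * X 1 ^ (desNum π + 1) : MvPolynomial (Fin 3) ℤ))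
          + pderiv 1 (∑ π : Equiv.Perm (Fin (M+1)), (X 0 ^ ascNum π * X 1 ^ (desNum π + 1) : MvPolynomial (Fin 3) ℤ))
          + pderiv 2 (∑ π : Equiv.Perm (Fin (M+1)), (X 0 ^ ascNum π * X 1 ^ (desNum π + 1) : MvPolynomial (Fin 3) ℤ)))
    rw [sum_perm_succ, Finset.mul_sum, map_sum, map_sum, map_sum,
      ← Finset.sum_add_distrib, ← Finset.sum_add_distrib, Finset.mul_sum,
      ← Finset.sum_add_distrib]
    exact Finset.sum_congr rfl fun σ _ => ins_sum_biv σ (by omega)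

lemma trivEuler_one : trivEuler 1 = 1 := by
  unfold trivEuler
  rw [Fintype.sum_unique]
  have h1 : bascNum (default : Equiv.Perm (Fin 1)) = 0 := rfl
  have h2 : desNum (default : Equiv.Perm (Fin 1)) = 0 := rfl
  have h3 : sucNum (default : Equiv.Perm (Fin 1)) = 0 := rfl
  rw [h1, h2, h3]
  simp

lemma excFixPoly_zero : excFixPoly 0 = 1 := by
  unfold excFixPoly
  rw [Fintype.sum_unique]
  have h1 : excNum (default : Equiv.Perm (Fin 0)) = 0 := rfl
  have h2 : aexcNum (default : Equiv.Perm (Fin 0)) = 0 := rfl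
  have h3 : fixNum (default : Equiv.Perm (Fin 0)) = 0 := rfl
  rw [h1, h2, h3]
  simp

end BivRec

end Aux

/-- `A_{n+1}(x,y,s) = Σ_{i=0}^n C(n,i) Ā_i(x,y) C_{n−i}(x,y,s)`. -/
theorem stmt4 (n : ℕ) :
    trivEuler (n + 1) =
      ∑ i ∈ range (n + 1),
        MvPolynomial.C (n.choose i : ℤ) * bivEuler i * excFixPoly (n - i) := by
  induction n with
  | zero =>
    rw [Finset.sum_range_one, trivEuler_one, excFixPoly_zero]
    show (1 : MvPolynomial (Fin 3) ℤ) = MvPolynomial.C ((Nat.choose 0 0 : ℕ) : ℤ) * bivEuler 0 * 1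
    rw [Nat.choose_self]
    show (1 : MvPolynomial (Fin 3) ℤ) = MvPolynomial.C ((1 : ℕ) : ℤ) * 1 * 1
    simp
  | succ n ih =>
    have recA := triv_rec (n+1) (by omega)
    rw [recA, ih]
    rw [Finset.mul_sum, map_sum, map_sum, map_sum, ← Finset.sum_add_distrib,
      ← Finset.sum_add_distrib, Finset.mul_sum, ← Finset.sum_add_distrib]
    have key : ∀ i ∈ range (n+1),
        (X 1 + X 2) * (MvPolynomial.C (n.choose i : ℤ) * bivEuler i * excFixPoly (n-i))
        + X 0 * X 1 * (pderiv 0 (MvPolynomial.C (n.choose i : ℤ) * bivEuler i * excFixPoly (n-i))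
          + pderiv 1 (MvPolynomial.C (n.choose i : ℤ) * bivEuler i * excFixPoly (n-i))
          + pderiv 2 (MvPolynomial.C (n.choose i : ℤ) * bivEuler i * excFixPoly (n-i)))
        = MvPolynomial.C (n.choose i : ℤ) * bivEuler (i+1) * excFixPoly (n-i)
          + MvPolynomial.C (n.choose i : ℤ) * bivEuler i * excFixPoly ((n-i)+1) := by
      intro i _
      have hC : ∀ j : Fin 3,
          pderiv j (MvPolynomial.C (n.choose i : ℤ) * bivEuler i * excFixPoly (n-i))
          = MvPolynomial.C (n.choose i : ℤ) * (pderiv j (bivEuler i) * excFixPoly (n-i)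
            + bivEuler i * pderiv j (excFixPoly (n-i))) := by
        intro j
        rw [mul_assoc, pderiv_C_mul, pderiv_mul]
      rw [hC 0, hC 1, hC 2, biv_rec_all i, excFix_rec (n-i)]
      ring
    rw [Finset.sum_congr rfl key, Finset.sum_add_distrib]
    have hBside : (∑ i ∈ range (n+1+1),
          MvPolynomial.C ((n+1).choose i : ℤ) * bivEuler i * excFixPoly (n+1-i))
        = (∑ i ∈ range (n+1), MvPolynomial.C (n.choose i : ℤ) * bivEuler (i+1) * excFixPoly (n-i))
          + ∑ i ∈ range (n+1), MvPolynomial.C (n.choose i : ℤ) * bivEuler i * excFixPoly ((n-i)+1) := by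
      set f : ℕ → MvPolynomial (Fin 3) ℤ :=
        fun i => MvPolynomial.C (n.choose i : ℤ) * bivEuler i * excFixPoly (n+1-i) with hf
      rw [Finset.sum_range_succ'
        (fun i => MvPolynomial.C ((n+1).choose i : ℤ) * bivEuler i * excFixPoly (n+1-i)) (n+1)]
      have hstep : ∀ i ∈ range (n+1),
          MvPolynomial.C ((n+1).choose (i+1) : ℤ) * bivEuler (i+1) * excFixPoly (n+1-(i+1))
          = MvPolynomial.C (n.choose i : ℤ) * bivEuler (i+1) * excFixPoly (n-i) + f (i+1) := by
        intro i _
        rw [hf]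
        dsimp only
        have hsub : n + 1 - (i+1) = n - i := Nat.succ_sub_succ n i
        have hch : ((n+1).choose (i+1) : ℤ) = (n.choose i : ℤ) + (n.choose (i+1) : ℤ) := by
          rw [Nat.choose_succ_succ]
          push_cast
          ring
        rw [hsub, hch, map_add]
        ring
      rw [Finset.sum_congr rfl hstep, Finset.sum_add_distrib]
      have h0 : MvPolynomial.C ((n+1).choose 0 : ℤ) * bivEuler 0 * excFixPoly (n+1-0)
          = f 0 := by
        rw [hf]
        dsimp only
        rw [Nat.choose_zero_right, Nat.choose_zero_right]
      rw [h0]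
      have e4 : ∑ i ∈ range (n+1+1), f i = (∑ i ∈ range (n+1), f (i+1)) + f 0 :=
        Finset.sum_range_succ' f (n+1)
      have e2 : ∑ i ∈ range (n+1+1), f i = (∑ i ∈ range (n+1), f i) + f (n+1) :=
        Finset.sum_range_succ f (n+1)
      have e3 : f (n+1) = 0 := by
        rw [hf]
        dsimp only
        rw [Nat.choose_succ_self]
        simp
      have e1 : ∑ i ∈ range (n+1), MvPolynomial.C (n.choose i : ℤ) * bivEuler i
            * excFixPoly ((n-i)+1) = ∑ i ∈ range (n+1), f i := by
        refine Finset.sum_congr rfl fun i hi => ?_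
        have hi' : i < n + 1 := Finset.mem_range.mp hi
        have hsub : n - i + 1 = n + 1 - i := by omega
        rw [hf]
        dsimp only
        rw [hsub]
      rw [e1]
      have : (∑ i ∈ range (n+1), f (i+1)) + f 0 = (∑ i ∈ range (n+1), f i) := by
        rw [← e4, e2, e3, add_zero]
      rw [add_assoc, this]
    rw [hBside]
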